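/- Let g: ℝ^m → ℝ be concave and differentiable with L-Lipschitz gradient, and z_n = x_n + β_n(x_n - x_{n-1}). Then ⟨∇g(z_n), x_{n+1} - x_n⟩ ≥ g(x_{n+1}) - g(x_n) - (L|β_n|/2)‖x_{n+1} - x_n‖² - (L|β_n|/2)‖x_n - x_{n-1}‖². -/

import Mathlib

open RealInnerProductSpace

lemma concave_grad_ineq {m : ℕ} (g : EuclideanSpace ℝ (Fin m) → ℝ)
    (g' : EuclideanSpace ℝ (Fin m) → EuclideanSpace ℝ (Fin m))
    (hconc : ConcaveOn ℝ Set.univ g)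
    (hg : ∀ x, HasGradientAt g (g' x) x)
    (y z : EuclideanSpace ℝ (Fin m)) :
    g z - g y ≤ ⟪g' y, z - y⟫ := by
  set φ : ℝ → ℝ := fun t => g (y + t • (z - y)) with hφ
  have hderiv : ∀ t : ℝ, HasDerivAt φ ⟪g' (y + t • (z - y)), z - y⟫ t := by
    intro t
    have hl : HasDerivAt (fun t : ℝ => y + t • (z - y)) (z - y) t := by
      simpa using ((hasDerivAt_id t).smul_const (z - y)).const_add y
    have := ((hg (y + t • (z - y))).hasFDerivAt.comp_hasDerivAt t hl)
    simp [InnerProductSpace.toDual_apply_apply] at this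
    exact this
  have hconcφ : ConcaveOn ℝ Set.univ φ := by
    have := hconc.comp_affineMap (AffineMap.lineMap y z)
    have heq : φ = g ∘ (AffineMap.lineMap y z) := by
      funext t
      simp only [hφ, Function.comp_apply]
      apply congrArg
      simp only [AffineMap.lineMap_apply, vsub_eq_sub, vadd_eq_add]
      module
    rw [heq]
    simpa using this
  have hslope := hconcφ.slope_le_of_hasDerivAt (Set.mem_univ (0:ℝ))
    (Set.mem_univ (1:ℝ)) one_pos (by
      have h0 := hderiv 0
      simp only [zero_smul, add_zero] at h0
      exact h0)
  have : slope φ 0 1 = g z - g y := by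
    simp [slope_def_field, hφ]
  linarith [hslope, this.symm.le, this.le]

/-- For concave `g` with `L`-Lipschitz gradient and `z = x + β(x - xm)`,
`⟪∇g(z), xp - x⟫ ≥ g(xp) - g(x) - (L|β|/2)‖xp - x‖² - (L|β|/2)‖x - xm‖²`. -/
theorem inner_grad_lower_bound_concave {m : ℕ} (g : EuclideanSpace ℝ (Fin m) → ℝ)
    (g' : EuclideanSpace ℝ (Fin m) → EuclideanSpace ℝ (Fin m)) (L : ℝ) (hL : 0 < L)
    (hconc : ConcaveOn ℝ Set.univ g)
    (hg : ∀ x, HasGradientAt g (g' x) x)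
    (hlip : ∀ x y, ‖g' x - g' y‖ ≤ L * ‖x - y‖)
    (xm x xp : EuclideanSpace ℝ (Fin m)) (β : ℝ) :
    g xp - g x - L * |β| / 2 * ‖xp - x‖ ^ 2 - L * |β| / 2 * ‖x - xm‖ ^ 2
      ≤ ⟪g' (x + β • (x - xm)), xp - x⟫ := by
  set z := x + β • (x - xm) with hz
  have h1 : g xp - g x ≤ ⟪g' x, xp - x⟫ := concave_grad_ineq g g' hconc hg x xp
  have h2 : ⟪g' x - g' z, xp - x⟫ ≤ L * |β| * ‖x - xm‖ * ‖xp - x‖ := by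
    calc ⟪g' x - g' z, xp - x⟫ ≤ ‖g' x - g' z‖ * ‖xp - x‖ := real_inner_le_norm _ _
    _ ≤ (L * ‖x - z‖) * ‖xp - x‖ := by
        have := hlip x z
        have h0 : (0:ℝ) ≤ ‖xp - x‖ := norm_nonneg _
        nlinarith [norm_nonneg (g' x - g' z)]
    _ = L * |β| * ‖x - xm‖ * ‖xp - x‖ := by
        have : x - z = (-β) • (x - xm) := by rw [hz]; module
        rw [this, norm_smul, Real.norm_eq_abs, abs_neg]
        ring
  have h3 : L * |β| * ‖x - xm‖ * ‖xp - x‖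
      ≤ L * |β| / 2 * ‖xp - x‖ ^ 2 + L * |β| / 2 * ‖x - xm‖ ^ 2 := by
    have hab : ‖x - xm‖ * ‖xp - x‖ ≤ (‖xp - x‖ ^ 2 + ‖x - xm‖ ^ 2) / 2 := by
      nlinarith [sq_nonneg (‖x - xm‖ - ‖xp - x‖)]
    have hLb : 0 ≤ L * |β| := mul_nonneg hL.le (abs_nonneg β)
    nlinarith
  have h4 : ⟪g' x, xp - x⟫ = ⟪g' z, xp - x⟫ + ⟪g' x - g' z, xp - x⟫ := by
    rw [← inner_add_left]; congr 1; abel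
  linarith
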